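/- Let H(G,K,ψ) = {ψ*f*ψ : f ∈ L(G)} = {f ∈ L(G) : f = ψ*f*ψ}. Then H(G,K,ψ) is an involutive subalgebra of L(G) contained in I(G,K,ψ) = {f ∈ L(G) : f*ψ = f}, and the map S_v : ~H(G,K,θ) → L(G) defined by (S_v F)(g) = d_θ·⟨F(g)v, v⟩ is a bijective *-anti-isomorphism of ~H(G,K,θ) onto H(G,K,ψ), i.e. it is linear bijective with S_v(F₁*F₂) = S_v(F₂)*S_v(F₁) and S_v(F*) = (S_v F)*. Moreover (1/√d_θ)·S_v is an isometry, every f ∈ H(G,K,ψ) is supported in the union of the double cosets KsK with s ∈ S₀, and T_v(ξ(F)f) = (T_v f)*(S_v F) for all f ∈ Ind_K^G V and F ∈ ~H(G,K,θ). -/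

import Mathlib

open scoped BigOperators ComplexConjugate Classical

set_option linter.unusedSectionVars false
set_option synthInstance.maxHeartbeats 1000000
set_option maxHeartbeats 1000000

noncomputable section

namespace MFT

variable {G : Type} [Group G] [Fintype G]
variable {V : Type} [NormedAddCommGroup V] [InnerProductSpace ℂ V] [FiniteDimensional ℂ V]

/-- Left translation of functions on `G`: `(translate h f) g = f (h⁻¹ * g)`.
This is the left regular action of `G`. -/
def translate {A : Type} (h : G) (f : G → A) : G → A := fun g => f (h⁻¹ * g)

/-- A representation by linear automorphisms is unitary if it preserves the inner product. -/
def IsUnitaryRep {H W : Type} [Group H] [NormedAddCommGroup W] [InnerProductSpace ℂ W]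
    (ρ : H →* (W ≃ₗ[ℂ] W)) : Prop :=
  ∀ (h : H) (x y : W), (inner ℂ (ρ h x) (ρ h y) : ℂ) = (inner ℂ x y : ℂ)

/-- Irreducibility of a representation: the space is nonzero and has no proper nonzero
invariant subspace. -/
def IsIrreducibleRep {H W : Type} [Group H] [AddCommGroup W] [Module ℂ W]
    (ρ : H →* (W ≃ₗ[ℂ] W)) : Prop :=
  (⊥ : Submodule ℂ W) ≠ ⊤ ∧
    ∀ p : Submodule ℂ W, (∀ (h : H) (x : W), x ∈ p → ρ h x ∈ p) → p = ⊥ ∨ p = ⊤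

variable (K : Subgroup G) (θ : ↥K →* (V ≃ₗ[ℂ] V))

/-- The space `Ind_K^G V` of the representation induced by `θ`:
functions `f : G → V` with `f (g k) = θ k⁻¹ (f g)`. -/
def ind : Submodule ℂ (G → V) where
  carrier := {f | ∀ (g : G) (k : K), f (g * (k : G)) = θ k⁻¹ (f g)}
  add_mem' := by
    intro f₁ f₂ h₁ h₂ g k
    simp only [Pi.add_apply, h₁ g k, h₂ g k, map_add]
  zero_mem' := by intro g k; simp
  smul_mem' := by
    intro c f hf g k
    simp only [Pi.smul_apply, hf g k, map_smul]

theorem translate_mem_ind {f : G → V} (hf : f ∈ ind K θ) (h : G) : translate h f ∈ ind K θ := by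
  intro g k
  simpa [translate, mul_assoc] using hf (h⁻¹ * g) k

/-- The left regular action of `G` on the induced space, `λ(h) f = f (h⁻¹ ·)`. -/
def lamL (h : G) : ↥(ind K θ) →ₗ[ℂ] ↥(ind K θ) where
  toFun f := ⟨translate h ↑f, translate_mem_ind K θ f.2 h⟩
  map_add' f₁ f₂ := by apply Subtype.ext; funext g; simp [translate]
  map_smul' c f := by apply Subtype.ext; funext g; simp [translate]

instance : AddCommGroup (↥(ind K θ) →ₗ[ℂ] ↥(ind K θ)) := LinearMap.addCommGroup

instance : Module ℂ (↥(ind K θ) →ₗ[ℂ] ↥(ind K θ)) := LinearMap.module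

/-- The Hecke algebra condition: `F (k₁ g k₂) = θ k₂⁻¹ ∘ F g ∘ θ k₁⁻¹`. -/
def IsHecke (F : G → (V →ₗ[ℂ] V)) : Prop :=
  ∀ (g : G) (k₁ k₂ : K),
    F ((k₁ : G) * g * (k₂ : G)) = (θ k₂⁻¹).toLinearMap ∘ₗ F g ∘ₗ (θ k₁⁻¹).toLinearMap

/-- Convolution on the Hecke algebra: `(F₁ * F₂) g = ∑ h, F₁ (h⁻¹ g) ∘ F₂ h`. -/
def heckeConv (F₁ F₂ : G → (V →ₗ[ℂ] V)) : G → (V →ₗ[ℂ] V) :=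
  fun g => ∑ h : G, F₁ (h⁻¹ * g) ∘ₗ F₂ h

/-- Involution on the Hecke algebra: `F* g = (F g⁻¹)*`. -/
def heckeStar (F : G → (V →ₗ[ℂ] V)) : G → (V →ₗ[ℂ] V) :=
  fun g => LinearMap.adjoint (F g⁻¹)

/-- The inner product on the Hecke algebra:
`⟨F₁, F₂⟩ = ∑ g, (dim V)⁻¹ tr (F₂(g)* ∘ F₁(g))`. -/
def heckeInner (F₁ F₂ : G → (V →ₗ[ℂ] V)) : ℂ :=
  ∑ g : G, (Module.finrank ℂ V : ℂ)⁻¹ *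
    LinearMap.trace ℂ V (LinearMap.adjoint (F₂ g) ∘ₗ F₁ g)

/-- `(ξ F) f g = ∑ h, F (h⁻¹ g) (f h)`. -/
def xiFun (F : G → (V →ₗ[ℂ] V)) (f : G → V) : G → V := fun g => ∑ h : G, F (h⁻¹ * g) (f h)

/-- `ξ F` as a linear endomorphism of `G → V`. -/
def xiL (F : G → (V →ₗ[ℂ] V)) : (G → V) →ₗ[ℂ] (G → V) where
  toFun := xiFun F
  map_add' f₁ f₂ := by funext g; simp [xiFun, Finset.sum_add_distrib]
  map_smul' c f := by funext g; simp [xiFun, Finset.smul_sum]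

/-- The paper's inner product on the induced space:
`⟨f₁, f₂⟩ = |K|⁻¹ ∑ g, ⟨f₁ g, f₂ g⟩_V` (conjugate-linear in the second variable). -/
def innerInd (f₁ f₂ : G → V) : ℂ := (Nat.card K : ℂ)⁻¹ * ∑ g : G, (inner ℂ (f₂ g) (f₁ g) : ℂ)

/-- Convolution of complex valued functions on `G`. -/
def convC (f₁ f₂ : G → ℂ) : G → ℂ := fun g => ∑ h : G, f₁ h * f₂ (h⁻¹ * g)

/-- The involution `f* g = conj (f g⁻¹)` on `L(G)`. -/
def starC (f : G → ℂ) : G → ℂ := fun g => conj (f g⁻¹)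

/-- The paper's inner product on `L(G)`: `⟨f₁, f₂⟩ = ∑ g, f₁ g • conj (f₂ g)`. -/
def innerC (f₁ f₂ : G → ℂ) : ℂ := ∑ g : G, f₁ g * conj (f₂ g)

/-- The function `ψ (k) = (d_θ/|K|) ⟨v, θ k v⟩` on `K`, extended by `0` on `G \ K`. -/
def psi (v : V) : G → ℂ := fun g =>
  if h : g ∈ K then ((Module.finrank ℂ V : ℂ) / (Nat.card K : ℂ)) * (inner ℂ (θ ⟨g, h⟩ v) v : ℂ)
  else 0

/-- `(T_v f) g = √(d_θ/|K|) ⟨f g, v⟩`. -/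
def Tv (v : V) (f : G → V) : G → ℂ := fun g =>
  (Real.sqrt ((Module.finrank ℂ V : ℝ) / (Nat.card K : ℝ)) : ℂ) * (inner ℂ v (f g) : ℂ)

/-- The Hecke algebra `H(G,K,ψ) = {f : f = ψ * f * ψ}` as a set. -/
def HSet (v : V) : Set (G → ℂ) := {f | convC (convC (psi K θ v) f) (psi K θ v) = f}

/-- `(S_v F) g = d_θ ⟨F g v, v⟩`. -/
def Sv (v : V) (F : G → (V →ₗ[ℂ] V)) : G → ℂ :=
  fun g => (Module.finrank ℂ V : ℂ) * (inner ℂ v (F g v) : ℂ)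

/-- A spherical function: an element of `H(G,K,ψ)` taking value `1` at the identity which
is an eigenvector of all convolution operators coming from `H(G,K,ψ)`. -/
def IsSpherical (v : V) (φ : G → ℂ) : Prop :=
  φ ∈ HSet K θ v ∧ φ 1 = 1 ∧ ∀ f ∈ HSet K θ v, ∃ c : ℂ, convC φ f = c • φ

/-- The intertwining space `Hom_{K_s}(Res^K_{K_s} θ, θ^s)` where `K_s = K ∩ s K s⁻¹`
and `θ^s (x) = θ (s⁻¹ x s)`. -/
def interSpace (s : G) : Submodule ℂ (V →ₗ[ℂ] V) where
  carrier := {T | ∀ (x : G) (hx : x ∈ K) (hx' : s⁻¹ * x * s ∈ K),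
      T ∘ₗ (θ ⟨x, hx⟩).toLinearMap = (θ ⟨s⁻¹ * x * s, hx'⟩).toLinearMap ∘ₗ T}
  add_mem' := by
    intro a b ha hb x hx hx'
    simp only [LinearMap.add_comp, LinearMap.comp_add, ha x hx hx', hb x hx hx']
  zero_mem' := by
    intro x hx hx'
    simp
  smul_mem' := by
    intro c a ha x hx hx'
    simp only [LinearMap.smul_comp, LinearMap.comp_smul, ha x hx hx']

/-- `S` is a complete set of representatives of the double cosets `K\G/K`. -/
def IsDoubleCosetReps (S : Finset G) : Prop :=
  ∀ g : G, ∃! s : G, s ∈ S ∧ ∃ k₁ k₂ : K, g = (k₁ : G) * s * (k₂ : G)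

/-- The commutant `End_G(Ind_K^G V)`. -/
def commutant : Submodule ℂ (↥(ind K θ) →ₗ[ℂ] ↥(ind K θ)) where
  carrier := {T | ∀ (h : G) (f : ↥(ind K θ)), T (lamL K θ h f) = lamL K θ h (T f)}
  add_mem' := by
    intro a b ha hb h f
    simp [ha h f, hb h f]
  zero_mem' := by intro h f; simp
  smul_mem' := by
    intro c a ha h f
    simp [ha h f]

/-- The space `Hom_G(W, Ind_K^G V)` of `G`-equivariant linear maps from `(σ, W)` to the
induced representation. -/
def homGInd {W : Type} [AddCommGroup W] [Module ℂ W] (σ : G →* (W ≃ₗ[ℂ] W)) :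
    Submodule ℂ (W →ₗ[ℂ] (G → V)) where
  carrier := {A | (∀ w : W, A w ∈ ind K θ) ∧ ∀ (g : G) (w : W), A (σ g w) = translate g (A w)}
  add_mem' := by
    rintro A B ⟨hA₁, hA₂⟩ ⟨hB₁, hB₂⟩
    refine ⟨fun w => (ind K θ).add_mem (hA₁ w) (hB₁ w), fun g w => ?_⟩
    funext x
    simp [translate, hA₂ g w, hB₂ g w, Pi.add_apply]
  zero_mem' := by
    refine ⟨fun w => (ind K θ).zero_mem, fun g w => ?_⟩
    funext x
    simp [translate]
  smul_mem' := by
    rintro c A ⟨hA₁, hA₂⟩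
    refine ⟨fun w => (ind K θ).smul_mem c (hA₁ w), fun g w => ?_⟩
    funext x
    simp [translate, hA₂ g w]

/-- `Ind_K^G θ` is multiplicity-free: every irreducible representation of `G` occurs with
multiplicity at most `1`. -/
def IsMultFree : Prop :=
  ∀ (W : Type) [AddCommGroup W] [Module ℂ W] [FiniteDimensional ℂ W]
    (σ : G →* (W ≃ₗ[ℂ] W)), IsIrreducibleRep σ → Module.finrank ℂ ↥(homGInd K θ σ) ≤ 1

theorem convC_add_left (f₁ f₂ g : G → ℂ) : convC (f₁ + f₂) g = convC f₁ g + convC f₂ g := by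
  funext x
  simp [convC, add_mul, Finset.sum_add_distrib]

theorem convC_add_right (f g₁ g₂ : G → ℂ) : convC f (g₁ + g₂) = convC f g₁ + convC f g₂ := by
  funext x
  simp [convC, mul_add, Finset.sum_add_distrib]

theorem convC_smul_left (c : ℂ) (f g : G → ℂ) : convC (c • f) g = c • convC f g := by
  funext x
  simp [convC, Finset.mul_sum, mul_assoc]

theorem convC_smul_right (c : ℂ) (f g : G → ℂ) : convC f (c • g) = c • convC f g := by
  funext x
  simp [convC, Finset.mul_sum, mul_left_comm]

theorem convC_zero_left (g : G → ℂ) : convC 0 g = 0 := by funext x; simp [convC]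

theorem convC_zero_right (f : G → ℂ) : convC f 0 = 0 := by funext x; simp [convC]

/-- The Hecke algebra `H(G,K,ψ)` as a subspace of `L(G)`. -/
def heckeSub (v : V) : Submodule ℂ (G → ℂ) where
  carrier := HSet K θ v
  add_mem' := by
    intro a b ha hb
    have ha' : convC (convC (psi K θ v) a) (psi K θ v) = a := ha
    have hb' : convC (convC (psi K θ v) b) (psi K θ v) = b := hb
    show convC (convC (psi K θ v) (a + b)) (psi K θ v) = a + b
    rw [convC_add_right, convC_add_left, ha', hb']
  zero_mem' := by
    show convC (convC (psi K θ v) 0) (psi K θ v) = 0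
    rw [convC_zero_right, convC_zero_left]
  smul_mem' := by
    intro c a ha
    have ha' : convC (convC (psi K θ v) a) (psi K θ v) = a := ha
    show convC (convC (psi K θ v) (c • a)) (psi K θ v) = c • a
    rw [convC_smul_right, convC_smul_left, ha']

/-- The subspace `I(G,K,ψ) = {f ∈ L(G) : f * ψ = f}`. -/
def ISub (v : V) : Submodule ℂ (G → ℂ) where
  carrier := {φ | convC φ (psi K θ v) = φ}
  add_mem' := by
    intro a b ha hb
    have ha' : convC a (psi K θ v) = a := ha
    have hb' : convC b (psi K θ v) = b := hb
    show convC (a + b) (psi K θ v) = a + b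
    rw [convC_add_left, ha', hb']
  zero_mem' := by
    show convC 0 (psi K θ v) = 0
    rw [convC_zero_left]
  smul_mem' := by
    intro c a ha
    have ha' : convC a (psi K θ v) = a := ha
    show convC (c • a) (psi K θ v) = c • a
    rw [convC_smul_left, ha']

/-- The subspace of `L(G)` spanned by the left translates of `φ`. -/
def sphSpan (φ : G → ℂ) : Submodule ℂ (G → ℂ) :=
  Submodule.span ℂ (Set.range fun g : G => translate g φ)

/-- A submodule of functions on `G` invariant under all left translations. -/
def IsInvariantSub {A : Type} [AddCommGroup A] [Module ℂ A] (p : Submodule ℂ (G → A)) : Prop :=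
  ∀ h : G, ∀ f ∈ p, translate h f ∈ p

/-- `p` is an irreducible `G`-invariant subspace of the induced representation. -/
def IsIrredSubOfInd (p : Submodule ℂ (G → V)) : Prop :=
  p ≤ ind K θ ∧ IsInvariantSub p ∧ p ≠ ⊥ ∧
    ∀ q : Submodule ℂ (G → V), q ≤ p → IsInvariantSub q → q = ⊥ ∨ q = p


/-! ### Auxiliary machinery for Statement 3 -/

section Aux

open scoped InnerProductSpace

lemma sum_subgroup {M : Type} [AddCommMonoid M] (K' : Subgroup G) (φ : G → M)
    (h0 : ∀ x : G, x ∉ K' → φ x = 0) : ∑ x : G, φ x = ∑ k : K', φ (k : G) := by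
  rw [← Finset.sum_subset (Finset.filter_subset (· ∈ K') Finset.univ)
    (fun x _ hx => h0 x (by simpa using hx))]
  exact Finset.sum_subtype _ (by simp) φ

lemma sum_mul_right {M : Type} [AddCommMonoid M] (φ : G → M) (a : G) :
    ∑ h : G, φ (h * a) = ∑ h : G, φ h :=
  Fintype.sum_equiv (Equiv.mulRight a) _ _ (fun _ => rfl)

lemma sum_mul_left {M : Type} [AddCommMonoid M] (φ : G → M) (a : G) :
    ∑ h : G, φ (a * h) = ∑ h : G, φ h :=
  Fintype.sum_equiv (Equiv.mulLeft a) _ _ (fun _ => rfl)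

/-- Rank-one operator `x ↦ ⟪u, x⟫ • w`. -/
def rankOne (u w : V) : V →ₗ[ℂ] V where
  toFun x := (inner ℂ u x : ℂ) • w
  map_add' x y := by simp [inner_add_right, add_smul]
  map_smul' c x := by simp [inner_smul_right, smul_smul]

@[simp] lemma rankOne_apply (u w x : V) : rankOne u w x = (inner ℂ u x : ℂ) • w := rfl

lemma trace_rankOne (u w : V) : LinearMap.trace ℂ V (rankOne u w) = (inner ℂ u w : ℂ) := by
  let b := stdOrthonormalBasis ℂ V
  rw [LinearMap.trace_eq_matrix_trace ℂ b.toBasis, Matrix.trace]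
  rw [← OrthonormalBasis.sum_inner_mul_inner b u w]
  congr 1; ext i
  simp [Matrix.diag, LinearMap.toMatrix_apply, OrthonormalBasis.coe_toBasis,
    OrthonormalBasis.coe_toBasis_repr_apply, OrthonormalBasis.repr_apply_apply,
    inner_smul_right, b]

variable {K : Subgroup G} {θ : ↥K →* (V ≃ₗ[ℂ] V)}

lemma theta_mul_apply (k₁ k₂ : K) (x : V) : θ (k₁ * k₂) x = θ k₁ (θ k₂ x) := by
  rw [map_mul]; rfl

lemma theta_inv_apply (k : K) (x : V) : θ k⁻¹ (θ k x) = x := by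
  rw [← theta_mul_apply, inv_mul_cancel]; simp

lemma theta_inv_apply' (k : K) (x : V) : θ k (θ k⁻¹ x) = x := by
  rw [← theta_mul_apply, mul_inv_cancel]; simp

lemma unit_left (hu : IsUnitaryRep θ) (k : K) (x y : V) :
    (inner ℂ (θ k x) y : ℂ) = inner ℂ x (θ k⁻¹ y) := by
  conv_lhs => rw [← theta_inv_apply' (θ := θ) k y]
  rw [hu k x (θ k⁻¹ y)]

lemma unit_right (hu : IsUnitaryRep θ) (k : K) (x y : V) :
    (inner ℂ x (θ k y) : ℂ) = inner ℂ (θ k⁻¹ x) y := by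
  conv_lhs => rw [← theta_inv_apply' (θ := θ) k x]
  rw [hu k (θ k⁻¹ x) y]

lemma nontrivial_of_irr (hirr : IsIrreducibleRep θ) : Nontrivial V := by
  by_contra h
  rw [not_nontrivial_iff_subsingleton] at h
  exact hirr.1 (Subsingleton.elim _ _)

lemma finrank_ne_zero (hirr : IsIrreducibleRep θ) : (Module.finrank ℂ V : ℂ) ≠ 0 := by
  haveI : Nontrivial V := nontrivial_of_irr hirr
  exact Nat.cast_ne_zero.mpr Module.finrank_pos.ne'

lemma card_ne_zero : (Nat.card K : ℂ) ≠ 0 := by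
  rw [Nat.card_eq_fintype_card]
  exact Nat.cast_ne_zero.mpr Fintype.card_ne_zero

/-- The key consequence of Schur's lemma:
`∑ k, ⟪θ k v, y⟫ • θ k v = (|K|/d) • y`. -/
lemma keyLV (hu : IsUnitaryRep θ) (hirr : IsIrreducibleRep θ) {v : V} (hv : ‖v‖ = 1) (y : V) :
    ∑ k : K, (inner ℂ (θ k v) y : ℂ) • (θ k v)
      = ((Nat.card K : ℂ) / (Module.finrank ℂ V : ℂ)) • y := by
  haveI : Nontrivial V := nontrivial_of_irr hirr
  set T : Module.End ℂ V := ∑ k : K, rankOne (θ k v) (θ k v) with hT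
  have hTapp : ∀ x : V, T x = ∑ k : K, (inner ℂ (θ k v) x : ℂ) • (θ k v) := by
    intro x; rw [hT]; simp [LinearMap.sum_apply]
  have hcomm : ∀ (h : K) (x : V), T (θ h x) = θ h (T x) := by
    intro h x
    rw [hTapp, hTapp, map_sum]
    refine (Fintype.sum_equiv (Equiv.mulLeft h) _ _ ?_).symm
    intro k
    simp only [Equiv.coe_mulLeft]
    rw [theta_mul_apply, map_smul, ← hu h (θ k v) x]
  obtain ⟨μ, hμ⟩ := Module.End.exists_eigenvalue T
  have heig : Module.End.eigenspace T μ = ⊤ := by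
    rcases hirr.2 (Module.End.eigenspace T μ) (fun h x hx => by
      rw [Module.End.mem_eigenspace_iff] at hx ⊢
      rw [hcomm, hx, map_smul]) with h | h
    · exact absurd h hμ
    · exact h
  have hsc : ∀ x : V, T x = μ • x := by
    intro x
    have : x ∈ Module.End.eigenspace T μ := heig ▸ Submodule.mem_top
    exact Module.End.mem_eigenspace_iff.mp this
  have htr1 : LinearMap.trace ℂ V T = (Nat.card K : ℂ) := by
    rw [hT, map_sum]
    have : ∀ k : K, LinearMap.trace ℂ V (rankOne (θ k v) (θ k v)) = 1 := by
      intro k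
      rw [trace_rankOne, hu, inner_self_eq_norm_sq_to_K, hv]
      norm_num
    rw [Finset.sum_congr rfl (fun k _ => this k)]
    simp [Nat.card_eq_fintype_card]
  have htr2 : LinearMap.trace ℂ V T = μ * (Module.finrank ℂ V : ℂ) := by
    have : T = μ • (LinearMap.id : V →ₗ[ℂ] V) := by
      apply LinearMap.ext; intro x; simp [hsc x]
    rw [this, map_smul, LinearMap.trace_id]
    simp [mul_comm]
  have hd : (Module.finrank ℂ V : ℂ) ≠ 0 := finrank_ne_zero hirr
  have hμval : μ = (Nat.card K : ℂ) / (Module.finrank ℂ V : ℂ) := by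
    field_simp
    rw [← htr2, htr1]
  rw [← hTapp, hsc, hμval]

/-- Completeness relation, scalar form. -/
lemma keyL1 (hu : IsUnitaryRep θ) (hirr : IsIrreducibleRep θ) {v : V} (hv : ‖v‖ = 1) (x y : V) :
    ∑ k : K, (inner ℂ x (θ k v) : ℂ) * (inner ℂ (θ k v) y : ℂ)
      = ((Nat.card K : ℂ) / (Module.finrank ℂ V : ℂ)) * (inner ℂ x y : ℂ) := by
  have := congrArg (fun z => (inner ℂ x z : ℂ)) (keyLV hu hirr hv y)
  simp only [inner_sum, inner_smul_right] at this
  rw [← this]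
  congr 1; ext k; ring

/-- Completeness relation, expansion form. -/
lemma keyExp (hu : IsUnitaryRep θ) (hirr : IsIrreducibleRep θ) {v : V} (hv : ‖v‖ = 1)
    (x y : V) :
    (inner ℂ x y : ℂ) = ((Module.finrank ℂ V : ℂ) / (Nat.card K : ℂ)) *
      ∑ k : K, (inner ℂ x (θ k v) : ℂ) * (inner ℂ (θ k v) y : ℂ) := by
  rw [keyL1 hu hirr hv x y]
  have hd := finrank_ne_zero hirr
  have hn := card_ne_zero (K := K)
  field_simp

end Aux


section Aux2

open scoped InnerProductSpace

variable {K : Subgroup G} {θ : ↥K →* (V ≃ₗ[ℂ] V)}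

lemma psi_coe (v : V) (k : K) :
    psi K θ v (k : G) = ((Module.finrank ℂ V : ℂ) / (Nat.card K : ℂ)) *
      (inner ℂ (θ k v) v : ℂ) := by
  have hk : (k : G) ∈ K := k.2
  rw [psi, dif_pos hk]

lemma psi_zero (v : V) {g : G} (hg : g ∉ K) : psi K θ v g = 0 := dif_neg hg

lemma psi_coe_inv (hu : IsUnitaryRep θ) (v : V) (k : K) :
    psi K θ v ((k : G)⁻¹) = ((Module.finrank ℂ V : ℂ) / (Nat.card K : ℂ)) *
      (inner ℂ v (θ k v) : ℂ) := by
  have : ((k : G)⁻¹) = ((k⁻¹ : K) : G) := rfl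
  rw [this, psi_coe, unit_left hu, inv_inv]

lemma conv_left_K (v : V) (f : G → ℂ) (g : G) :
    convC (psi K θ v) f g = ∑ k : K, psi K θ v k * f ((k : G)⁻¹ * g) := by
  rw [convC]
  exact sum_subgroup K _ (fun x hx => by rw [psi_zero v hx, zero_mul])

lemma conv_right_K (v : V) (f : G → ℂ) (g : G) :
    convC f (psi K θ v) g = ∑ k : K, f (g * (k : G)⁻¹) * psi K θ v k := by
  rw [convC]
  rw [show (∑ h : G, f h * psi K θ v (h⁻¹ * g))
      = ∑ y : G, f (g * y⁻¹) * psi K θ v y from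
    Fintype.sum_equiv ((Equiv.inv G).trans (Equiv.mulRight g)) _ _
      (fun y => by simp [Equiv.trans_apply, mul_inv_rev, mul_inv_cancel_left])]
  exact sum_subgroup K _ (fun x hx => by rw [psi_zero v hx, mul_zero])

lemma convC_assoc (a b c : G → ℂ) : convC (convC a b) c = convC a (convC b c) := by
  funext g
  simp only [convC, Finset.sum_mul, Finset.mul_sum]
  rw [Finset.sum_comm]
  refine Finset.sum_congr rfl (fun h _ => ?_)
  refine Fintype.sum_equiv (Equiv.mulLeft h⁻¹) _ _ (fun x => ?_)
  simp only [Equiv.coe_mulLeft]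
  rw [mul_inv_rev, inv_inv, mul_assoc, mul_assoc, mul_inv_cancel_left]

lemma starC_conv (a b : G → ℂ) : starC (convC a b) = convC (starC b) (starC a) := by
  funext g
  rw [starC, convC, map_sum]
  refine Fintype.sum_equiv (Equiv.mulLeft g) _ _ (fun h => ?_)
  simp only [starC, convC, Equiv.coe_mulLeft, map_mul]
  rw [mul_comm]
  congr 2
  · group
  · group

lemma starC_psi (hu : IsUnitaryRep θ) (v : V) : starC (psi K θ v) = psi K θ v := by
  funext g
  by_cases hg : g ∈ K
  · set a : K := (⟨g, hg⟩ : K) with ha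
    have e1 : psi K θ v g⁻¹ = ((Module.finrank ℂ V : ℂ) / (Nat.card K : ℂ)) *
        (inner ℂ (θ a⁻¹ v) v : ℂ) := psi_coe v a⁻¹
    have e2 : psi K θ v g = ((Module.finrank ℂ V : ℂ) / (Nat.card K : ℂ)) *
        (inner ℂ (θ a v) v : ℂ) := psi_coe v a
    rw [starC, e1, e2, map_mul, inner_conj_symm, ← unit_left hu a]
    congr 1
    simp [map_div₀]
  · rw [starC, psi_zero v hg, psi_zero v (fun h => hg (by simpa using inv_mem h)), map_zero]

lemma psi_conv_psi (hu : IsUnitaryRep θ) (hirr : IsIrreducibleRep θ) {v : V} (hv : ‖v‖ = 1) :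
    convC (psi K θ v) (psi K θ v) = psi K θ v := by
  funext g
  rw [conv_left_K]
  by_cases hg : g ∈ K
  · set m : K := ⟨g, hg⟩ with hm
    have hcoe : ∀ k : K, (k : G)⁻¹ * g = ((k⁻¹ * m : K) : G) := fun k => rfl
    have step : ∀ k : K, psi K θ v k * psi K θ v ((k : G)⁻¹ * g)
        = ((Module.finrank ℂ V : ℂ) / (Nat.card K : ℂ))^2 *
          ((inner ℂ (θ k v) v : ℂ) * (inner ℂ (θ (k⁻¹ * m) v) v : ℂ)) := by
      intro k
      rw [hcoe k, psi_coe, psi_coe]; ring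
    rw [Finset.sum_congr rfl (fun k _ => step k), ← Finset.mul_sum]
    have reidx : ∑ k : K, (inner ℂ (θ k v) v : ℂ) * (inner ℂ (θ (k⁻¹ * m) v) v : ℂ)
        = ∑ k : K, (inner ℂ (θ m v) (θ k v) : ℂ) * (inner ℂ (θ k v) v : ℂ) := by
      refine Finset.sum_congr rfl (fun k _ => ?_)
      rw [theta_mul_apply, unit_left hu k⁻¹, inv_inv]
      ring
    rw [reidx, keyL1 hu hirr hv (θ m v) v]
    have e2 : psi K θ v g = ((Module.finrank ℂ V : ℂ) / (Nat.card K : ℂ)) *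
        (inner ℂ (θ m v) v : ℂ) := psi_coe v m
    rw [e2]
    have hd := finrank_ne_zero hirr
    have hn := card_ne_zero (K := K)
    field_simp
  · rw [psi_zero v hg]
    refine Finset.sum_eq_zero (fun k _ => ?_)
    have : (k : G)⁻¹ * g ∉ K := by
      intro h
      exact hg (by simpa using mul_mem k.2 h)
    rw [psi_zero v this, mul_zero]

end Aux2


section Aux3

open scoped InnerProductSpace

variable {K : Subgroup G} {θ : ↥K →* (V ≃ₗ[ℂ] V)}

lemma hecke_apply {F : G → (V →ₗ[ℂ] V)} (hF : IsHecke K θ F) (g : G) (k₁ k₂ : K) (x : V) :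
    F ((k₁ : G) * g * (k₂ : G)) x = θ k₂⁻¹ (F g (θ k₁⁻¹ x)) := by
  rw [hF g k₁ k₂]; rfl

lemma hecke_right {F : G → (V →ₗ[ℂ] V)} (hF : IsHecke K θ F) (g : G) (k : K) (x : V) :
    F (g * (k : G)) x = θ k⁻¹ (F g x) := by
  have := hecke_apply hF g 1 k x
  simpa using this

lemma hecke_left {F : G → (V →ₗ[ℂ] V)} (hF : IsHecke K θ F) (g : G) (k : K) (x : V) :
    F ((k : G) * g) x = F g (θ k⁻¹ x) := by
  have := hecke_apply hF g k 1 x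
  simpa using this

/-- The inverse of `S_v`. -/
def Phi (K : Subgroup G) (θ : ↥K →* (V ≃ₗ[ℂ] V)) (v : V) (f : G → ℂ) : G → (V →ₗ[ℂ] V) :=
  fun g => ((Module.finrank ℂ V : ℂ) / ((Nat.card K : ℂ) * (Nat.card K : ℂ))) •
    ∑ k₁ : K, ∑ k₂ : K, f ((k₁ : G)⁻¹ * g * (k₂ : G)⁻¹) •
      ((θ k₂⁻¹).toLinearMap ∘ₗ rankOne v v ∘ₗ (θ k₁⁻¹).toLinearMap)

lemma Phi_apply (v : V) (f : G → ℂ) (g : G) (x : V) :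
    Phi K θ v f g x
      = ((Module.finrank ℂ V : ℂ) / ((Nat.card K : ℂ) * (Nat.card K : ℂ))) •
        ∑ k₁ : K, ∑ k₂ : K, (f ((k₁ : G)⁻¹ * g * (k₂ : G)⁻¹) *
          (inner ℂ v (θ k₁⁻¹ x) : ℂ)) • θ k₂⁻¹ v := by
  simp [Phi, LinearMap.sum_apply, LinearMap.smul_apply, LinearMap.comp_apply,
    map_smul, smul_smul]

lemma Phi_hecke (v : V) (f : G → ℂ) : IsHecke K θ (Phi K θ v f) := by
  intro g a b
  apply LinearMap.ext; intro x
  simp only [LinearMap.comp_apply, LinearEquiv.coe_coe]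
  rw [Phi_apply, Phi_apply, map_smul, map_sum]
  congr 1
  refine Fintype.sum_equiv (Equiv.mulLeft a⁻¹) _ _ (fun k₁ => ?_)
  rw [map_sum]
  refine Fintype.sum_equiv (Equiv.mulRight b⁻¹) _ _ (fun k₂ => ?_)
  simp only [Equiv.coe_mulLeft, Equiv.coe_mulRight]
  rw [map_smul]
  have harg : ((((a⁻¹ * k₁ : K) : G))⁻¹ * g * (((k₂ * b⁻¹ : K) : G))⁻¹)
      = ((k₁ : G)⁻¹ * ((a : G) * g * (b : G)) * (k₂ : G)⁻¹) := by
    push_cast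
    group
  rw [harg]
  have h1 : θ (a⁻¹ * k₁)⁻¹ ((θ a⁻¹) x) = θ k₁⁻¹ x := by
    rw [← theta_mul_apply]
    congr 1
    group
  have h2 : θ b⁻¹ (θ (k₂ * b⁻¹)⁻¹ v) = θ k₂⁻¹ v := by
    rw [← theta_mul_apply]
    congr 1
    group
  rw [h1, h2]

lemma psi_conv_conv (v : V) (f : G → ℂ) (g : G) :
    convC (convC (psi K θ v) f) (psi K θ v) g
      = ∑ k₁ : K, ∑ k₂ : K, (psi K θ v k₁ * psi K θ v k₂) *
          f ((k₁ : G)⁻¹ * g * (k₂ : G)⁻¹) := by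
  rw [conv_right_K]
  rw [Finset.sum_congr rfl (fun k₂ _ => by rw [conv_left_K])]
  rw [Finset.sum_comm]
  refine Finset.sum_congr rfl (fun k₁ _ => ?_)
  rw [Finset.sum_mul]
  refine Finset.sum_congr rfl (fun k₂ _ => ?_)
  rw [show ((k₂ : G))⁻¹ * (g * ((k₁ : G))⁻¹) = ((k₂ : G))⁻¹ * g * ((k₁ : G))⁻¹ from
    (mul_assoc _ g _).symm]
  ring

lemma Sv_Phi (hu : IsUnitaryRep θ) (v : V) (f : G → ℂ) :
    Sv v (Phi K θ v f) = convC (convC (psi K θ v) f) (psi K θ v) := by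
  funext g
  simp only [Sv]
  rw [psi_conv_conv, Phi_apply]
  simp only [inner_smul_right, inner_sum, Finset.mul_sum, smul_eq_mul]
  refine Finset.sum_congr rfl (fun k₁ _ => Finset.sum_congr rfl (fun k₂ _ => ?_))
  have e1 : psi K θ v (k₁ : G) = ((Module.finrank ℂ V : ℂ) / (Nat.card K : ℂ)) *
      (inner ℂ (θ k₁ v) v : ℂ) := psi_coe v k₁
  have e2 : psi K θ v (k₂ : G) = ((Module.finrank ℂ V : ℂ) / (Nat.card K : ℂ)) *
      (inner ℂ (θ k₂ v) v : ℂ) := psi_coe v k₂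
  rw [e1, e2, unit_left hu k₁, unit_left hu k₂]
  ring

lemma Phi_Sv (hu : IsUnitaryRep θ) (hirr : IsIrreducibleRep θ) {v : V} (hv : ‖v‖ = 1)
    {F : G → (V →ₗ[ℂ] V)} (hF : IsHecke K θ F) : Phi K θ v (Sv v F) = F := by
  have hd := finrank_ne_zero (θ := θ) hirr
  have hn := card_ne_zero (K := K)
  set d : ℂ := (Module.finrank ℂ V : ℂ) with hdd
  set n : ℂ := (Nat.card K : ℂ) with hnn
  funext g; apply LinearMap.ext; intro x
  rw [Phi_apply]
  -- rewrite each term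
  have step1 : ∀ k₁ k₂ : K,
      (Sv v F ((k₁ : G)⁻¹ * g * (k₂ : G)⁻¹) * (inner ℂ v (θ k₁⁻¹ x) : ℂ)) • θ k₂⁻¹ v
      = (d * (inner ℂ (θ k₂⁻¹ v) (F g (θ k₁ v)) : ℂ) * (inner ℂ v (θ k₁⁻¹ x) : ℂ)) • θ k₂⁻¹ v := by
    intro k₁ k₂
    congr 2
    rw [Sv]
    have : F ((k₁ : G)⁻¹ * g * (k₂ : G)⁻¹) v = θ k₂ (F g (θ k₁ v)) := by
      have h := hecke_apply hF g k₁⁻¹ k₂⁻¹ v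
      simpa [inv_inv] using h
    rw [this, unit_right hu k₂]
  rw [Finset.sum_congr rfl (fun k₁ _ => Finset.sum_congr rfl (fun k₂ _ => step1 k₁ k₂))]
  -- reindex k₁ ↦ k₁⁻¹, k₂ ↦ k₂⁻¹
  have step2 : (∑ k₁ : K, ∑ k₂ : K,
        (d * (inner ℂ (θ k₂⁻¹ v) (F g (θ k₁ v)) : ℂ) * (inner ℂ v (θ k₁⁻¹ x) : ℂ)) • θ k₂⁻¹ v)
      = ∑ k₁ : K, ∑ k₂ : K,
        (d * (inner ℂ (θ k₂ v) (F g (θ k₁⁻¹ v)) : ℂ) * (inner ℂ v (θ k₁ x) : ℂ)) • θ k₂ v := by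
    refine Fintype.sum_equiv (Equiv.inv K) _ _ (fun k₁ => ?_)
    refine Fintype.sum_equiv (Equiv.inv K) _ _ (fun k₂ => ?_)
    simp only [Equiv.inv_apply, inv_inv]
  rw [step2]
  -- perform the inner k₂ sum
  have step3 : ∀ k₁ : K, (∑ k₂ : K,
        (d * (inner ℂ (θ k₂ v) (F g (θ k₁⁻¹ v)) : ℂ) * (inner ℂ v (θ k₁ x) : ℂ)) • θ k₂ v)
      = (d * (inner ℂ v (θ k₁ x) : ℂ) * (n / d)) • F g (θ k₁⁻¹ v) := by
    intro k₁
    have : ∀ k₂ : K,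
        (d * (inner ℂ (θ k₂ v) (F g (θ k₁⁻¹ v)) : ℂ) * (inner ℂ v (θ k₁ x) : ℂ)) • θ k₂ v
        = (d * (inner ℂ v (θ k₁ x) : ℂ)) • ((inner ℂ (θ k₂ v) (F g (θ k₁⁻¹ v)) : ℂ) • θ k₂ v) := by
      intro k₂; rw [smul_smul, mul_right_comm]
    rw [Finset.sum_congr rfl (fun k₂ _ => this k₂), ← Finset.smul_sum,
      keyLV hu hirr hv (F g (θ k₁⁻¹ v)), smul_smul]
  rw [Finset.sum_congr rfl (fun k₁ _ => step3 k₁)]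
  -- perform the k₁ sum
  have step4 : (∑ k₁ : K, (d * (inner ℂ v (θ k₁ x) : ℂ) * (n / d)) • F g (θ k₁⁻¹ v))
      = n • F g (((n / d) : ℂ) • x) := by
    have e1 : ∀ k₁ : K, (d * (inner ℂ v (θ k₁ x) : ℂ) * (n / d)) • F g (θ k₁⁻¹ v)
        = n • F g ((inner ℂ (θ k₁⁻¹ v) x : ℂ) • θ k₁⁻¹ v) := by
      intro k₁
      rw [map_smul, smul_smul, unit_right hu k₁]
      congr 1
      field_simp
    rw [Finset.sum_congr rfl (fun k₁ _ => e1 k₁), ← Finset.smul_sum, ← map_sum]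
    congr 2
    refine (Fintype.sum_equiv (Equiv.inv K) _ _ (fun k => ?_)).trans
      (keyLV hu hirr hv x)
    simp [Equiv.inv_apply]
  rw [step4, map_smul, smul_smul, smul_smul]
  have hsc : ∀ c : ℂ, c = 1 → c • F g x = F g x := fun c hc => by rw [hc, one_smul]
  refine hsc _ ?_
  field_simp
  rw [← hnn, ← hdd]
  ring

/-- The trace formula `∑ₖ ⟪θ k v, A (θ k v)⟫ = (|K|/d) tr A`. -/
lemma trace_formula (hu : IsUnitaryRep θ) (hirr : IsIrreducibleRep θ) {v : V} (hv : ‖v‖ = 1)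
    (A : V →ₗ[ℂ] V) :
    ∑ k : K, (inner ℂ (θ k v) (A (θ k v)) : ℂ)
      = ((Nat.card K : ℂ) / (Module.finrank ℂ V : ℂ)) * LinearMap.trace ℂ V A := by
  have h1 : ∀ k : K, (inner ℂ (θ k v) (A (θ k v)) : ℂ)
      = LinearMap.trace ℂ V (A ∘ₗ rankOne (θ k v) (θ k v)) := by
    intro k
    rw [show A ∘ₗ rankOne (θ k v) (θ k v) = rankOne (θ k v) (A (θ k v)) from
      LinearMap.ext (fun x => by simp), trace_rankOne]
  rw [Finset.sum_congr rfl (fun k _ => h1 k), ← map_sum]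
  have h2 : (∑ k : K, A ∘ₗ rankOne (θ k v) (θ k v))
      = ((Nat.card K : ℂ) / (Module.finrank ℂ V : ℂ)) • A := by
    apply LinearMap.ext; intro x
    simp only [LinearMap.sum_apply, LinearMap.comp_apply, rankOne_apply,
      LinearMap.smul_apply]
    have : ∑ k : K, A ((inner ℂ (θ k v) x : ℂ) • θ k v)
        = A (∑ k : K, (inner ℂ (θ k v) x : ℂ) • θ k v) := (map_sum A _ _).symm
    rw [this, keyLV hu hirr hv x, map_smul]
  rw [h2, map_smul, smul_eq_mul]

end Aux3


section Aux4

open scoped InnerProductSpace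

variable {K : Subgroup G} {θ : ↥K →* (V ≃ₗ[ℂ] V)}

lemma left_absorb (hu : IsUnitaryRep θ) (hirr : IsIrreducibleRep θ) {v : V} (hv : ‖v‖ = 1)
    {f : G → ℂ} (hf : convC (convC (psi K θ v) f) (psi K θ v) = f) :
    convC (psi K θ v) f = f := by
  conv_lhs => rw [← hf]
  rw [← convC_assoc, ← convC_assoc, psi_conv_psi hu hirr hv, hf]

lemma right_absorb (hu : IsUnitaryRep θ) (hirr : IsIrreducibleRep θ) {v : V} (hv : ‖v‖ = 1)
    {f : G → ℂ} (hf : convC (convC (psi K θ v) f) (psi K θ v) = f) :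
    convC f (psi K θ v) = f := by
  conv_lhs => rw [← hf]
  rw [convC_assoc (convC (psi K θ v) f), psi_conv_psi hu hirr hv, hf]

lemma sum_sum_K {M : Type} [AddCommMonoid M] (φ : G → M) :
    ∑ h : G, ∑ k : K, φ (h * (k : G)) = (Nat.card K) • ∑ h : G, φ h := by
  rw [Finset.sum_comm]
  have h1 : ∀ k : K, ∑ x : G, φ (x * (k : G)) = ∑ h : G, φ h := fun k => sum_mul_right φ _
  rw [Finset.sum_congr rfl (fun k _ => h1 k), Finset.sum_const, Finset.card_univ,
    Nat.card_eq_fintype_card]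

lemma vec_expand (hu : IsUnitaryRep θ) (hirr : IsIrreducibleRep θ) {v : V} (hv : ‖v‖ = 1)
    (y : V) :
    y = ((Module.finrank ℂ V : ℂ) / (Nat.card K : ℂ)) •
      ∑ k : K, (inner ℂ (θ k v) y : ℂ) • (θ k v) := by
  rw [keyLV hu hirr hv y, smul_smul]
  have hd := finrank_ne_zero (θ := θ) hirr
  have hn := card_ne_zero (K := K)
  rw [show (Module.finrank ℂ V : ℂ) / (Nat.card K : ℂ) *
      ((Nat.card K : ℂ) / (Module.finrank ℂ V : ℂ)) = 1 from by field_simp, one_smul]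

lemma Sv_star {v : V} {F : G → (V →ₗ[ℂ] V)} :
    Sv v (heckeStar F) = starC (Sv v F) := by
  funext g
  rw [Sv, starC, Sv, heckeStar, map_mul, inner_conj_symm, LinearMap.adjoint_inner_right]
  congr 1
  simp

/-- Anti-multiplicativity of `S_v`. -/
lemma Sv_conv (hu : IsUnitaryRep θ) (hirr : IsIrreducibleRep θ) {v : V} (hv : ‖v‖ = 1)
    {F₁ F₂ : G → (V →ₗ[ℂ] V)} (h₁ : IsHecke K θ F₁) (h₂ : IsHecke K θ F₂) :
    Sv v (heckeConv F₁ F₂) = convC (Sv v F₂) (Sv v F₁) := by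
  have hd := finrank_ne_zero (θ := θ) hirr
  have hn := card_ne_zero (K := K)
  set d : ℂ := (Module.finrank ℂ V : ℂ) with hdd
  set n : ℂ := (Nat.card K : ℂ) with hnn
  funext g
  have lhs1 : Sv v (heckeConv F₁ F₂) g
      = d * ∑ h : G, (inner ℂ v (F₁ (h⁻¹ * g) (F₂ h v)) : ℂ) := by
    rw [Sv, heckeConv]
    simp [LinearMap.sum_apply, LinearMap.comp_apply, inner_sum]
    exact Or.inl hdd.symm
  -- expand each term using the completeness relation
  have term : ∀ h : G, (inner ℂ v (F₁ (h⁻¹ * g) (F₂ h v)) : ℂ)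
      = (d / n) * ∑ k : K, (inner ℂ v (F₂ (h * (k : G)) v) : ℂ) *
          (inner ℂ v (F₁ ((h * (k : G))⁻¹ * g) v) : ℂ) := by
    intro h
    conv_lhs => rw [vec_expand hu hirr hv (F₂ h v)]
    simp only [map_smul, map_sum, inner_smul_right, inner_sum, Finset.mul_sum, smul_eq_mul]
    refine Finset.sum_congr rfl (fun k _ => ?_)
    have e1 : (inner ℂ (θ k v) (F₂ h v) : ℂ) = inner ℂ v (F₂ (h * (k : G)) v) := by
      rw [unit_left hu k, hecke_right h₂ h k v]
    have e2 : F₁ (h⁻¹ * g) (θ k v) = F₁ ((h * (k : G))⁻¹ * g) v := by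
      have := hecke_left h₁ (h⁻¹ * g) k⁻¹ v
      rw [inv_inv] at this
      rw [← this]
      congr 1
      simp [mul_inv_rev, mul_assoc]
    rw [e1, e2]
  rw [lhs1, Finset.sum_congr rfl (fun h _ => term h), ← Finset.mul_sum]
  rw [show (∑ h : G, ∑ k : K, (inner ℂ v (F₂ (h * (k : G)) v) : ℂ) *
      (inner ℂ v (F₁ ((h * (k : G))⁻¹ * g) v) : ℂ))
    = (Nat.card K) • ∑ h : G, (inner ℂ v (F₂ h v) : ℂ) *
      (inner ℂ v (F₁ (h⁻¹ * g) v) : ℂ) from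
    sum_sum_K (fun h => (inner ℂ v (F₂ h v) : ℂ) * (inner ℂ v (F₁ (h⁻¹ * g) v) : ℂ))]
  rw [nsmul_eq_mul, convC]
  simp only [Finset.mul_sum]
  refine Finset.sum_congr rfl (fun h _ => ?_)
  rw [Sv, Sv]
  rw [show ((Nat.card K : ℕ) : ℂ) = n from hnn.symm]
  field_simp
  ring

end Aux4


section Aux5

open scoped InnerProductSpace

variable {K : Subgroup G} {θ : ↥K →* (V ≃ₗ[ℂ] V)}

lemma sum_sum_K_left {M : Type} [AddCommMonoid M] (φ : G → M) :
    ∑ g : G, ∑ k : K, φ ((k : G)⁻¹ * g) = (Nat.card K) • ∑ g : G, φ g := by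
  rw [Finset.sum_comm]
  have h1 : ∀ k : K, ∑ x : G, φ ((k : G)⁻¹ * x) = ∑ h : G, φ h := fun k => sum_mul_left φ _
  rw [Finset.sum_congr rfl (fun k _ => h1 k), Finset.sum_const, Finset.card_univ,
    Nat.card_eq_fintype_card]

lemma conj_finrank : (starRingEnd ℂ) ((Module.finrank ℂ V : ℂ)) = (Module.finrank ℂ V : ℂ) := by
  simp

/-- The isometry property of `S_v`. -/
lemma Sv_isometry (hu : IsUnitaryRep θ) (hirr : IsIrreducibleRep θ) {v : V} (hv : ‖v‖ = 1)
    {F₁ F₂ : G → (V →ₗ[ℂ] V)} (h₁ : IsHecke K θ F₁) (h₂ : IsHecke K θ F₂) :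
    innerC (Sv v F₁) (Sv v F₂) = (Module.finrank ℂ V : ℂ) * heckeInner F₁ F₂ := by
  have hd := finrank_ne_zero (θ := θ) hirr
  have hn := card_ne_zero (K := K)
  have hcard : ((Nat.card K : ℕ) : ℂ) = (Nat.card K : ℂ) := rfl
  -- trace identity
  have h_tr : ∀ g : G, LinearMap.trace ℂ V (LinearMap.adjoint (F₂ g) ∘ₗ F₁ g)
      = ((Module.finrank ℂ V : ℂ) / (Nat.card K : ℂ)) *
        ∑ k : K, (inner ℂ (F₂ ((k : G)⁻¹ * g) v) (F₁ ((k : G)⁻¹ * g) v) : ℂ) := by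
    intro g
    have t1 := trace_formula hu hirr hv (LinearMap.adjoint (F₂ g) ∘ₗ F₁ g)
    have t2 : ∀ k : K, (inner ℂ (θ k v) ((LinearMap.adjoint (F₂ g) ∘ₗ F₁ g) (θ k v)) : ℂ)
        = inner ℂ (F₂ ((k : G)⁻¹ * g) v) (F₁ ((k : G)⁻¹ * g) v) := by
      intro k
      rw [LinearMap.comp_apply, LinearMap.adjoint_inner_right]
      have e1 := hecke_left h₁ g k⁻¹ v; rw [inv_inv] at e1; push_cast at e1
      have e2 := hecke_left h₂ g k⁻¹ v; rw [inv_inv] at e2; push_cast at e2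
      rw [← e1, ← e2]
    rw [Finset.sum_congr rfl (fun k _ => t2 k)] at t1
    rw [t1, ← mul_assoc, show ((Module.finrank ℂ V : ℂ) / (Nat.card K : ℂ)) *
      ((Nat.card K : ℂ) / (Module.finrank ℂ V : ℂ)) = 1 from by field_simp, one_mul]
  -- the Y = d * X identity
  have main : (∑ g : G, (inner ℂ (F₂ g v) (F₁ g v) : ℂ))
      = (Module.finrank ℂ V : ℂ) * ∑ g : G,
        (inner ℂ (F₂ g v) v : ℂ) * (inner ℂ v (F₁ g v) : ℂ) := by
    have perg : ∀ g : G, (inner ℂ (F₂ g v) (F₁ g v) : ℂ)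
        = ((Module.finrank ℂ V : ℂ) / (Nat.card K : ℂ)) *
          ∑ k : K, (inner ℂ (F₂ (g * (k : G)) v) v : ℂ) *
            (inner ℂ v (F₁ (g * (k : G)) v) : ℂ) := by
      intro g
      rw [keyExp hu hirr hv (F₂ g v) (F₁ g v)]
      congr 1
      refine Finset.sum_congr rfl (fun k _ => ?_)
      rw [unit_right hu k, unit_left hu k, ← hecke_right h₂ g k v, ← hecke_right h₁ g k v]
    rw [Finset.sum_congr rfl (fun g _ => perg g), ← Finset.mul_sum]
    rw [show (∑ g : G, ∑ k : K, (inner ℂ (F₂ (g * (k : G)) v) v : ℂ) *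
        (inner ℂ v (F₁ (g * (k : G)) v) : ℂ))
      = (Nat.card K) • ∑ g : G, (inner ℂ (F₂ g v) v : ℂ) * (inner ℂ v (F₁ g v) : ℂ) from
      sum_sum_K (fun g => (inner ℂ (F₂ g v) v : ℂ) * (inner ℂ v (F₁ g v) : ℂ))]
    rw [nsmul_eq_mul, hcard, ← mul_assoc]
    congr 1
    field_simp
  -- rewrite RHS
  have rhs_eq : heckeInner F₁ F₂ = ∑ g : G, (inner ℂ (F₂ g v) (F₁ g v) : ℂ) := by
    rw [heckeInner]
    have t3 : ∀ g : G, ((Module.finrank ℂ V : ℂ))⁻¹ *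
        LinearMap.trace ℂ V (LinearMap.adjoint (F₂ g) ∘ₗ F₁ g)
        = ((Nat.card K : ℂ))⁻¹ *
          ∑ k : K, (inner ℂ (F₂ ((k : G)⁻¹ * g) v) (F₁ ((k : G)⁻¹ * g) v) : ℂ) := by
      intro g
      rw [h_tr g, ← mul_assoc]
      congr 1
      field_simp
    rw [Finset.sum_congr rfl (fun g _ => t3 g), ← Finset.mul_sum]
    rw [show (∑ g : G, ∑ k : K,
        (inner ℂ (F₂ ((k : G)⁻¹ * g) v) (F₁ ((k : G)⁻¹ * g) v) : ℂ))
      = (Nat.card K) • ∑ g : G, (inner ℂ (F₂ g v) (F₁ g v) : ℂ) from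
      sum_sum_K_left (fun g => (inner ℂ (F₂ g v) (F₁ g v) : ℂ))]
    rw [nsmul_eq_mul, hcard, ← mul_assoc, inv_mul_cancel₀ hn, one_mul]
  -- rewrite LHS
  have lhs_eq : innerC (Sv v F₁) (Sv v F₂)
      = ((Module.finrank ℂ V : ℂ) * (Module.finrank ℂ V : ℂ)) *
        ∑ g : G, (inner ℂ (F₂ g v) v : ℂ) * (inner ℂ v (F₁ g v) : ℂ) := by
    rw [innerC, Finset.mul_sum]
    refine Finset.sum_congr rfl (fun g _ => ?_)
    rw [Sv, Sv, map_mul, inner_conj_symm, conj_finrank]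
    ring
  rw [lhs_eq, rhs_eq, main]
  ring

/-- Compatibility of `ξ` and `T_v` with `S_v`. -/
lemma Tv_xi (hu : IsUnitaryRep θ) (hirr : IsIrreducibleRep θ) {v : V} (hv : ‖v‖ = 1)
    {F : G → (V →ₗ[ℂ] V)} (hF : IsHecke K θ F) {f : G → V} (hf : f ∈ ind K θ) :
    Tv K v (xiFun F f) = convC (Tv K v f) (Sv v F) := by
  have hd := finrank_ne_zero (θ := θ) hirr
  have hn := card_ne_zero (K := K)
  have hcard : ((Nat.card K : ℕ) : ℂ) = (Nat.card K : ℂ) := rfl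
  have hf' : ∀ (g : G) (k : K), f (g * (k : G)) = θ k⁻¹ (f g) := hf
  funext g
  have lhs1 : Tv K v (xiFun F f) g
      = (Real.sqrt ((Module.finrank ℂ V : ℝ) / (Nat.card K : ℝ)) : ℂ) *
        ∑ h : G, (inner ℂ v (F (h⁻¹ * g) (f h)) : ℂ) := by
    rw [Tv, xiFun, inner_sum]
  have term : ∀ h : G, (inner ℂ v (F (h⁻¹ * g) (f h)) : ℂ)
      = ((Module.finrank ℂ V : ℂ) / (Nat.card K : ℂ)) *
        ∑ k : K, (inner ℂ v (f (h * (k : G))) : ℂ) *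
          (inner ℂ v (F ((h * (k : G))⁻¹ * g) v) : ℂ) := by
    intro h
    conv_lhs => rw [vec_expand hu hirr hv (f h)]
    simp only [map_smul, map_sum, inner_smul_right, inner_sum, Finset.mul_sum, smul_eq_mul]
    refine Finset.sum_congr rfl (fun k _ => ?_)
    have e1 : (inner ℂ (θ k v) (f h) : ℂ) = inner ℂ v (f (h * (k : G))) := by
      rw [unit_left hu k, hf' h k]
    have e2 : F (h⁻¹ * g) (θ k v) = F ((h * (k : G))⁻¹ * g) v := by
      have := hecke_left hF (h⁻¹ * g) k⁻¹ v
      rw [inv_inv] at this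
      rw [← this]
      congr 1
      simp [mul_inv_rev, mul_assoc]
    rw [e1, e2]
  rw [lhs1, Finset.sum_congr rfl (fun h _ => term h), ← Finset.mul_sum]
  rw [show (∑ h : G, ∑ k : K, (inner ℂ v (f (h * (k : G))) : ℂ) *
      (inner ℂ v (F ((h * (k : G))⁻¹ * g) v) : ℂ))
    = (Nat.card K) • ∑ h : G, (inner ℂ v (f h) : ℂ) * (inner ℂ v (F (h⁻¹ * g) v) : ℂ) from
    sum_sum_K (fun h => (inner ℂ v (f h) : ℂ) * (inner ℂ v (F (h⁻¹ * g) v) : ℂ))]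
  rw [nsmul_eq_mul, hcard, convC]
  simp only [Finset.mul_sum]
  refine Finset.sum_congr rfl (fun h _ => ?_)
  rw [Tv, Sv, mul_assoc]
  congr 1
  field_simp

/-- A Hecke function evaluated at `s` intertwines `Res θ` and `θ^s`. -/
lemma hecke_mem_interSpace {F : G → (V →ₗ[ℂ] V)} (hF : IsHecke K θ F) (s : G) :
    F s ∈ interSpace K θ s := by
  intro x hx hx'
  apply LinearMap.ext; intro y
  simp only [LinearMap.comp_apply, LinearEquiv.coe_coe]
  have e1 : F (x⁻¹ * s) y = F s (θ (⟨x, hx⟩ : K) y) := by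
    have h1 := hecke_left hF s (⟨x, hx⟩ : K)⁻¹ y
    rw [inv_inv] at h1
    exact h1
  have h2 := hecke_right hF s (⟨s⁻¹ * x * s, hx'⟩ : K)⁻¹ y
  rw [inv_inv] at h2
  have harg : s * ((((⟨s⁻¹ * x * s, hx'⟩ : K)⁻¹ : K)) : G) = x⁻¹ * s := by
    show s * (s⁻¹ * x * s)⁻¹ = x⁻¹ * s
    group
  rw [harg] at h2
  rw [← e1, h2]

end Aux5

/-- `H(G,K,ψ) = {ψ*f*ψ : f ∈ L(G)} = {f : f = ψ*f*ψ}` is an involutive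
subalgebra of `I(G,K,ψ)`, and `S_v : ~H(G,K,θ) → L(G)`, `(S_v F) g = d_θ ⟨F g v, v⟩`, is a
bijective ∗-anti-isomorphism from the Hecke algebra `~H(G,K,θ)` onto `H(G,K,ψ)`; moreover
`(1/√d_θ) S_v` is an isometry, every `f ∈ H(G,K,ψ)` is supported in `⋃_{s ∈ S₀} K s K`, and
`T_v (ξ(F) f) = (T_v f) * (S_v F)`. -/
theorem statement3 (K : Subgroup G) (θ : ↥K →* (V ≃ₗ[ℂ] V))
    (hu : IsUnitaryRep θ) (hirr : IsIrreducibleRep θ) (v : V) (hv : ‖v‖ = 1)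
    (S : Finset G) (hS : IsDoubleCosetReps K S) :
    -- H(G,K,ψ) is contained in I(G,K,ψ) and is an involutive subalgebra of L(G):
    (HSet K θ v ⊆ {φ : G → ℂ | convC φ (psi K θ v) = φ}) ∧
    ({f : G → ℂ | ∃ f' : G → ℂ, f = convC (convC (psi K θ v) f') (psi K θ v)} = HSet K θ v) ∧
    (∀ f₁ ∈ HSet K θ v, ∀ f₂ ∈ HSet K θ v, f₁ + f₂ ∈ HSet K θ v) ∧
    (∀ c : ℂ, ∀ f ∈ HSet K θ v, c • f ∈ HSet K θ v) ∧
    (∀ f₁ ∈ HSet K θ v, ∀ f₂ ∈ HSet K θ v, convC f₁ f₂ ∈ HSet K θ v) ∧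
    (∀ f ∈ HSet K θ v, starC f ∈ HSet K θ v) ∧
    -- S_v is linear ...
    (∀ F₁ F₂ : G → (V →ₗ[ℂ] V), Sv v (F₁ + F₂) = Sv v F₁ + Sv v F₂) ∧
    (∀ (c : ℂ) (F : G → (V →ₗ[ℂ] V)), Sv v (c • F) = c • Sv v F) ∧
    -- ... maps the Hecke algebra bijectively onto H(G,K,ψ) ...
    (∀ F : G → (V →ₗ[ℂ] V), IsHecke K θ F → Sv v F ∈ HSet K θ v) ∧
    (∀ F₁ F₂ : G → (V →ₗ[ℂ] V), IsHecke K θ F₁ → IsHecke K θ F₂ →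
      Sv v F₁ = Sv v F₂ → F₁ = F₂) ∧
    (∀ f ∈ HSet K θ v, ∃ F : G → (V →ₗ[ℂ] V), IsHecke K θ F ∧ Sv v F = f) ∧
    -- ... is anti-multiplicative and preserves the involutions:
    (∀ F₁ F₂ : G → (V →ₗ[ℂ] V), IsHecke K θ F₁ → IsHecke K θ F₂ →
      Sv v (heckeConv F₁ F₂) = convC (Sv v F₂) (Sv v F₁)) ∧
    (∀ F : G → (V →ₗ[ℂ] V), IsHecke K θ F → Sv v (heckeStar F) = starC (Sv v F)) ∧
    -- (1/√d_θ) S_v is an isometry: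
    (∀ F₁ F₂ : G → (V →ₗ[ℂ] V), IsHecke K θ F₁ → IsHecke K θ F₂ →
      innerC (Sv v F₁) (Sv v F₂) = (Module.finrank ℂ V : ℂ) * heckeInner F₁ F₂) ∧
    -- support condition: every f ∈ H(G,K,ψ) is supported in ⋃_{s ∈ S₀} KsK:
    (∀ f ∈ HSet K θ v, ∀ g : G, f g ≠ 0 →
      ∃ s ∈ S, interSpace K θ s ≠ ⊥ ∧ ∃ k₁ k₂ : K, g = (k₁ : G) * s * (k₂ : G)) ∧
    -- compatibility with ξ and T_v:
    (∀ F : G → (V →ₗ[ℂ] V), IsHecke K θ F → ∀ f ∈ ind K θ,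
      Tv K v (xiFun F f) = convC (Tv K v f) (Sv v F)) := by
  refine ⟨?_, ?_, ?_, ?_, ?_, ?_, ?_, ?_, ?_, ?_, ?_, ?_, ?_, ?_, ?_, ?_⟩
  · -- H(G,K,ψ) ⊆ I(G,K,ψ)
    intro f hf
    exact right_absorb hu hirr hv hf
  · -- {ψ*f*ψ} = HSet
    ext f
    constructor
    · rintro ⟨f', rfl⟩
      have h1 : convC (psi K θ v) (convC (convC (psi K θ v) f') (psi K θ v))
          = convC (convC (psi K θ v) f') (psi K θ v) := by
        rw [← convC_assoc (psi K θ v) (convC (psi K θ v) f') (psi K θ v),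
          ← convC_assoc (psi K θ v) (psi K θ v) f', psi_conv_psi hu hirr hv]
      have h2 : convC (convC (convC (psi K θ v) f') (psi K θ v)) (psi K θ v)
          = convC (convC (psi K θ v) f') (psi K θ v) := by
        rw [convC_assoc (convC (psi K θ v) f') (psi K θ v) (psi K θ v),
          psi_conv_psi hu hirr hv]
      show convC (convC (psi K θ v)
        (convC (convC (psi K θ v) f') (psi K θ v))) (psi K θ v)
          = convC (convC (psi K θ v) f') (psi K θ v)
      rw [h1, h2]
    · intro hf
      exact ⟨f, hf.symm⟩
  · -- closed under addition
    intro f₁ h₁ f₂ h₂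
    have h₁' : convC (convC (psi K θ v) f₁) (psi K θ v) = f₁ := h₁
    have h₂' : convC (convC (psi K θ v) f₂) (psi K θ v) = f₂ := h₂
    show convC (convC (psi K θ v) (f₁ + f₂)) (psi K θ v) = f₁ + f₂
    rw [convC_add_right, convC_add_left, h₁', h₂']
  · -- closed under scalar multiplication
    intro c f hf
    have hf' : convC (convC (psi K θ v) f) (psi K θ v) = f := hf
    show convC (convC (psi K θ v) (c • f)) (psi K θ v) = c • f
    rw [convC_smul_right, convC_smul_left, hf']
  · -- closed under convolution
    intro f₁ h₁ f₂ h₂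
    have l := left_absorb hu hirr hv h₁
    have r := right_absorb hu hirr hv h₂
    show convC (convC (psi K θ v) (convC f₁ f₂)) (psi K θ v) = convC f₁ f₂
    rw [← convC_assoc (psi K θ v) f₁ f₂, l, convC_assoc f₁ f₂ (psi K θ v), r]
  · -- closed under the involution
    intro f hf
    have hf' : convC (convC (psi K θ v) f) (psi K θ v) = f := hf
    have key : starC f = convC (convC (psi K θ v) (starC f)) (psi K θ v) := by
      conv_lhs => rw [← hf']
      rw [starC_conv, starC_conv, starC_psi hu, ← convC_assoc]
    exact key.symm
  · -- additivity of S_v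
    intro F₁ F₂
    funext g
    simp only [Sv, Pi.add_apply, LinearMap.add_apply, inner_add_right, mul_add]
  · -- homogeneity of S_v
    intro c F
    funext g
    simp only [Sv, Pi.smul_apply, LinearMap.smul_apply, inner_smul_right, smul_eq_mul]
    ring
  · -- S_v maps into H(G,K,ψ)
    intro F hF
    have h9 := Sv_Phi hu v (Sv v F)
    rw [Phi_Sv hu hirr hv hF] at h9
    exact h9.symm
  · -- injectivity
    intro F₁ F₂ h₁ h₂ he
    rw [← Phi_Sv hu hirr hv h₁, ← Phi_Sv hu hirr hv h₂, he]
  · -- surjectivity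
    intro f hf
    have hf' : convC (convC (psi K θ v) f) (psi K θ v) = f := hf
    exact ⟨Phi K θ v f, Phi_hecke v f, by rw [Sv_Phi hu v f]; exact hf'⟩
  · -- anti-multiplicativity
    intro F₁ F₂ h₁ h₂
    exact Sv_conv hu hirr hv h₁ h₂
  · -- compatibility with involutions
    intro F _
    exact Sv_star
  · -- the isometry property
    intro F₁ F₂ h₁ h₂
    exact Sv_isometry hu hirr hv h₁ h₂
  · -- the support property
    intro f hf g hfg
    have hf' : convC (convC (psi K θ v) f) (psi K θ v) = f := hf
    have hFH : IsHecke K θ (Phi K θ v f) := Phi_hecke v f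
    have hSv : Sv v (Phi K θ v f) = f := by rw [Sv_Phi hu v f]; exact hf'
    obtain ⟨s, ⟨hsS, k₁, k₂, hg⟩, -⟩ := hS g
    refine ⟨s, hsS, ?_, k₁, k₂, hg⟩
    rw [Submodule.ne_bot_iff]
    refine ⟨Phi K θ v f s, hecke_mem_interSpace hFH s, ?_⟩
    intro h0
    apply hfg
    rw [← hSv]
    show (Module.finrank ℂ V : ℂ) * (inner ℂ v (Phi K θ v f g v) : ℂ) = 0
    have hz : Phi K θ v f g v = 0 := by
      rw [hg, hecke_apply hFH s k₁ k₂ v, h0]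
      simp
    rw [hz, inner_zero_right, mul_zero]
  · -- compatibility with ξ and T_v
    intro F hF f hf
    exact Tv_xi hu hirr hv hF hf

end MFT
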